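/- Let V₂ ⊆ (ℂ²)^{⊗n₂} be a 2-dimensional codespace with orthonormal basis {|0̄⟩, |1̄⟩} satisfying (∏_{i∈A} Z_i)|ā⟩ = (−1)^a |ā⟩ for some A ⊆ {1,…,n₂}, and let V₃ ⊆ (ℂ²)^{⊗n₃} be a 2-dimensional codespace with orthonormal basis {|0̃⟩, |1̃⟩} satisfying (∏_{j∈B} X_j)|b̃⟩ = |(1−b)͂⟩ for some B ⊆ {1,…,n₃}. Then the round-robin product U = ∏_{(i,j)∈A×B} CNOT_{i→j} of |A|·|B| physical CNOT gates maps V₂ ⊗ V₃ onto itself and implements the logical CNOT gate with the first code as control and the second as target: U(|ā⟩ ⊗ |b̃⟩) = |ā⟩ ⊗ |(a⊕b)͂⟩ for all a, b ∈ {0,1}. -/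

import Mathlib

open scoped Classical
open Matrix

noncomputable section

/-- basis vector `|x⟩` -/
def bvec {α : Type*} (x : α) : α → ℂ := fun y => if y = x then 1 else 0

/-- inner product `⟪v, w⟫` on basis-indexed amplitude vectors -/
def qInner {α : Type*} [Fintype α] (v w : α → ℂ) : ℂ :=
  ∑ x, (starRingEnd ℂ) (v x) * w x

/-- Pauli X -/
def σx : Matrix Bool Bool ℂ := Matrix.of fun a b => if a = !b then 1 else 0
/-- Pauli Y -/
def σy : Matrix Bool Bool ℂ :=
  Matrix.of fun a b => if a = !b then (if a then Complex.I else -Complex.I) else 0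
/-- Pauli Z -/
def σz : Matrix Bool Bool ℂ := Matrix.of fun a b => if a = b then (if a then -1 else 1) else 0
/-- Hadamard -/
def Hgate : Matrix Bool Bool ℂ :=
  Matrix.of fun a b => (if a && b then -1 else 1) / (Real.sqrt 2 : ℂ)
/-- phase gate S = diag(1, i) -/
def Sgate : Matrix Bool Bool ℂ :=
  Matrix.of fun a b => if a = b then (if a then Complex.I else 1) else 0
/-- Z(θ) = diag(1, e^{iθ}) -/
def Zrot (θ : ℝ) : Matrix Bool Bool ℂ :=
  Matrix.of fun a b => if a = b then (if a then Complex.exp (θ * Complex.I) else 1) else 0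

/-- tensor product over `ι` of single-qubit matrices -/
def tensMat {ι : Type*} [Fintype ι] (P : ι → Matrix Bool Bool ℂ) :
    Matrix (ι → Bool) (ι → Bool) ℂ :=
  Matrix.of fun x y => ∏ i, P i (x i) (y i)

/-- CNOT with control `i`, target `t`, in one register -/
def CNOT {ι : Type*} (i t : ι) : Matrix (ι → Bool) (ι → Bool) ℂ :=
  Matrix.of fun y x => if y = Function.update x t (xor (x i) (x t)) then 1 else 0

/-- Z(θ) applied to qubit `t` -/
def ZrotAt {ι : Type*} (θ : ℝ) (t : ι) : Matrix (ι → Bool) (ι → Bool) ℂ :=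
  Matrix.of fun y x => if y = x then (if x t then Complex.exp (θ * Complex.I) else 1) else 0

/-- `parityOdd A x` : the bits of `x` indexed by `A` have odd parity -/
def parityOdd {ι : Type*} (A : Finset ι) (x : ι → Bool) : Prop :=
  (A.filter fun i => x i = true).card % 2 = 1

/-- `∏_{i ∈ A} Z_i` -/
def ZA {ι : Type*} [Fintype ι] (A : Finset ι) : Matrix (ι → Bool) (ι → Bool) ℂ :=
  tensMat fun i => if i ∈ A then σz else 1

/-- `∏_{j ∈ B} X_j` -/
def XB {ι : Type*} [Fintype ι] (B : Finset ι) : Matrix (ι → Bool) (ι → Bool) ℂ :=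
  tensMat fun j => if j ∈ B then σx else 1

/-- the joint `+1`-eigenspace of a set of matrices, as a submodule -/
def jointFixed {ι : Type*} [Fintype ι] (S : Set (Matrix (ι → Bool) (ι → Bool) ℂ)) :
    Submodule ℂ ((ι → Bool) → ℂ) where
  carrier := {v | ∀ g ∈ S, g.mulVec v = v}
  add_mem' := by
    intro a b ha hb g hg
    rw [Matrix.mulVec_add, ha g hg, hb g hg]
  zero_mem' := by
    intro g hg
    rw [Matrix.mulVec_zero]
  smul_mem' := by
    intro c a ha g hg
    rw [Matrix.mulVec_smul, ha g hg]

/-- a matrix on qubits `ι` acts only on the qubits in `A` (identity elsewhere) -/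
def ActsOnlyOn {ι : Type*} (M : Matrix (ι → Bool) (ι → Bool) ℂ) (A : Set ι) : Prop :=
  ∃ W : Matrix (A → Bool) (A → Bool) ℂ,
    ∀ x y, M x y =
      if ∀ i, i ∉ A → x i = y i then W (fun i => x i.val) (fun i => y i.val) else 0

/-- an `ι`-qubit Pauli operator `i^c · ⨂_i P_i` -/
structure PauliOp (ι : Type*) [Fintype ι] where
  phase : Fin 4
  fac : ι → Matrix Bool Bool ℂ
  isPauli : ∀ i, fac i = 1 ∨ fac i = σx ∨ fac i = σy ∨ fac i = σz

def PauliOp.toMatrix {ι : Type*} [Fintype ι] (p : PauliOp ι) :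
    Matrix (ι → Bool) (ι → Bool) ℂ :=
  Complex.I ^ (p.phase : ℕ) • tensMat p.fac

/-- number of non-identity tensor factors -/
def PauliOp.weight {ι : Type*} [Fintype ι] (p : PauliOp ι) : ℕ :=
  Set.ncard {i | p.fac i ≠ 1}

/-- tensor product of states of two registers -/
def tens2 {ι κ : Type*} (v : (ι → Bool) → ℂ) (w : (κ → Bool) → ℂ) :
    (ι → Bool) × (κ → Bool) → ℂ :=
  fun p => v p.1 * w p.2

/-- CNOT with control qubit `i` of the first register and target qubit `j` of the second -/
def CNOT2 {ι κ : Type*} (i : ι) (j : κ) :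
    Matrix ((ι → Bool) × (κ → Bool)) ((ι → Bool) × (κ → Bool)) ℂ :=
  Matrix.of fun y x =>
    if y = (x.1, Function.update x.2 j (xor (x.1 i) (x.2 j))) then 1 else 0

-- Steane code
def steaneGen : Fin 3 → (Fin 7 → Bool) :=
  ![![false, false, false, true, true, true, true],
    ![false, true, true, false, false, true, true],
    ![true, false, true, false, true, false, true]]

/-- the binary [7,3] code generated by 0001111, 0110011, 1010101 -/
def hammingC : Set (Fin 7 → Bool) :=
  {c | ∃ a b e : Bool,
    c = fun i => xor (a && steaneGen 0 i) (xor (b && steaneGen 1 i) (e && steaneGen 2 i))}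

/-- Steane logical basis: `steane false = |0̄⟩`, `steane true = |1̄⟩ = X^{⊗7}|0̄⟩` -/
def steane : Bool → ((Fin 7 → Bool) → ℂ) := fun b =>
  if b then (tensMat fun _ => σx).mulVec (fun y => if y ∈ hammingC then ((Real.sqrt 8 : ℂ))⁻¹ else 0)
  else fun y => if y ∈ hammingC then ((Real.sqrt 8 : ℂ))⁻¹ else 0

-- 5-qubit code
def fiveStab : Fin 4 → Matrix (Fin 5 → Bool) (Fin 5 → Bool) ℂ :=
  ![tensMat ![σx, σz, σz, σx, 1],
    tensMat ![1, σx, σz, σz, σx],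
    tensMat ![σx, 1, σx, σz, σz],
    tensMat ![σz, σx, 1, σx, σz]]

def fiveCodespace : Submodule ℂ ((Fin 5 → Bool) → ℂ) :=
  jointFixed (Set.range fiveStab)

/-- a choice of logical basis for the 5-qubit code -/
def fiveLogical (v : Bool → ((Fin 5 → Bool) → ℂ)) : Prop :=
  (∀ b, v b ∈ fiveCodespace) ∧ (∀ b, qInner (v b) (v b) = 1) ∧
  (tensMat fun _ : Fin 5 => σz).mulVec (v false) = v false ∧
  (tensMat fun _ : Fin 5 => σz).mulVec (v true) = -(v true) ∧
  (tensMat fun _ : Fin 5 => σx).mulVec (v false) = v true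

-- [[15,1,3]] Reed–Muller code
def rmBit (i : Fin 15) (j : Fin 4) : Bool := Nat.testBit (i.val + 1) j.val

def rmXstab (j : Fin 4) : Matrix (Fin 15 → Bool) (Fin 15 → Bool) ℂ :=
  tensMat fun i => if rmBit i j then σx else 1

def rmZstab (j k : Fin 4) : Matrix (Fin 15 → Bool) (Fin 15 → Bool) ℂ :=
  tensMat fun i => if rmBit i j && rmBit i k then σz else 1

def rmCodespace : Submodule ℂ ((Fin 15 → Bool) → ℂ) :=
  jointFixed ({M | ∃ j, M = rmXstab j} ∪ {M | ∃ j k, j < k ∧ M = rmZstab j k})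

/-- a choice of logical basis for the [[15,1,3]] Reed–Muller code -/
def rmLogical (w : Bool → ((Fin 15 → Bool) → ℂ)) : Prop :=
  (∀ b, w b ∈ rmCodespace) ∧ (∀ b, qInner (w b) (w b) = 1) ∧
  (tensMat fun _ : Fin 15 => σz).mulVec (w false) = w false ∧
  (tensMat fun _ : Fin 15 => σz).mulVec (w true) = -(w true) ∧
  (tensMat fun _ : Fin 15 => σx).mulVec (w false) = w true


section auxlem

variable {ι κ : Type*} [Fintype ι] [Fintype κ] [DecidableEq ι] [DecidableEq κ]

lemma ZA_apply' (A : Finset ι) (x y : ι → Bool) :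
    ZA A x y = if y = x then (-1 : ℂ) ^ (A.filter fun i => x i = true).card else 0 := by
  unfold ZA tensMat
  by_cases h : y = x
  · subst h
    rw [if_pos rfl]
    simp only [Matrix.of_apply]
    refine Eq.trans (Finset.prod_congr rfl
      (g := fun i => if i ∈ A ∧ y i = true then (-1 : ℂ) else 1) fun i _ => ?_) ?_
    · by_cases hA : i ∈ A <;> by_cases hy : y i = true <;>
        simp [hA, hy, σz, Matrix.one_apply]
    · rw [Finset.prod_ite, Finset.prod_const, Finset.prod_const, one_pow, mul_one]
      congr 2
      ext i
      simp [Finset.mem_filter]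
  · rw [if_neg h]
    have : ∃ i, ¬ y i = x i := by
      by_contra hc
      push_neg at hc
      exact h (funext hc)
    obtain ⟨i, hi⟩ := this
    apply Finset.prod_eq_zero (Finset.mem_univ i)
    have hxy : ¬ x i = y i := fun h' => hi h'.symm
    by_cases hA : i ∈ A
    · simp [hA, σz, hxy]
    · simp [hA, Matrix.one_apply, hxy]

lemma ZA_mulVec' (A : Finset ι) (u : (ι → Bool) → ℂ) (x : ι → Bool) :
    (ZA A).mulVec u x = (-1 : ℂ) ^ (A.filter fun i => x i = true).card * u x := by
  unfold Matrix.mulVec dotProduct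
  simp [ZA_apply', ite_mul]

lemma support_parity (A : Finset ι) (a : Bool) (v : (ι → Bool) → ℂ)
    (hZ : (ZA A).mulVec v = (if a then (-1 : ℂ) else 1) • v)
    (x : ι → Bool) (hx : v x ≠ 0) :
    (((A.filter fun i => x i = true).card % 2 == 1) = a) := by
  have h := congrFun hZ x
  rw [ZA_mulVec'] at h
  simp only [Pi.smul_apply, smul_eq_mul] at h
  have h2 : (-1 : ℂ) ^ (A.filter fun i => x i = true).card = if a then -1 else 1 :=
    mul_right_cancel₀ hx h
  set m := (A.filter fun i => x i = true).card with hm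
  rcases Nat.even_or_odd m with he | ho
  · rw [he.neg_one_pow] at h2
    cases a
    · simp [Nat.even_iff.mp he]
    · norm_num at h2
  · rw [ho.neg_one_pow] at h2
    cases a
    · norm_num at h2
    · simp [Nat.odd_iff.mp ho]

lemma XB_apply' (B : Finset κ) (y x : κ → Bool) :
    XB B y x = if x = (fun j => xor (decide (j ∈ B)) (y j)) then 1 else 0 := by
  unfold XB tensMat
  simp only [Matrix.of_apply]
  by_cases h : x = (fun j => xor (decide (j ∈ B)) (y j))
  · rw [if_pos h]
    apply Finset.prod_eq_one
    intro j _
    have hx : x j = xor (decide (j ∈ B)) (y j) := congrFun h j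
    by_cases hB : j ∈ B
    · simp only [hB, decide_true] at hx
      have : y j = !(x j) := by rw [hx]; simp
      simp [hB, σx, this]
    · simp only [hB, decide_false] at hx
      simp [hB, Matrix.one_apply, hx]
  · rw [if_neg h]
    have : ∃ j, ¬ x j = xor (decide (j ∈ B)) (y j) := by
      by_contra hc
      push_neg at hc
      exact h (funext hc)
    obtain ⟨j, hj⟩ := this
    apply Finset.prod_eq_zero (Finset.mem_univ j)
    by_cases hB : j ∈ B
    · simp only [hB, decide_true] at hj
      have : ¬ y j = !(x j) := by
        intro h'
        apply hj
        rw [h']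
        simp
      simp [hB, σx, this]
    · simp only [hB, decide_false] at hj
      have hxy : ¬ y j = x j := fun h' => hj (by rw [h']; simp)
      simp [hB, Matrix.one_apply, hxy]

lemma XB_mulVec' (B : Finset κ) (u : (κ → Bool) → ℂ) (y : κ → Bool) :
    (XB B).mulVec u y = u (fun j => xor (decide (j ∈ B)) (y j)) := by
  unfold Matrix.mulVec dotProduct
  simp [XB_apply', ite_mul]

lemma CNOT2_mulVec (i : ι) (j : κ) (u : ((ι → Bool) × (κ → Bool)) → ℂ)
    (q : (ι → Bool) × (κ → Bool)) :
    (CNOT2 i j).mulVec u q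
      = u (q.1, Function.update q.2 j (xor (q.1 i) (q.2 j))) := by
  have hff : ∀ x : (ι → Bool) × (κ → Bool),
      ((x.1, Function.update x.2 j (xor (x.1 i) (x.2 j))).1,
        Function.update (x.1, Function.update x.2 j (xor (x.1 i) (x.2 j))).2 j
          (xor ((x.1, Function.update x.2 j (xor (x.1 i) (x.2 j))).1 i)
            ((x.1, Function.update x.2 j (xor (x.1 i) (x.2 j))).2 j))) = x := by
    intro x
    refine Prod.ext rfl ?_
    funext k
    dsimp only
    by_cases hk : k = j
    · subst hk
      rw [Function.update_self, Function.update_self, ← Bool.xor_assoc, Bool.xor_self,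
        Bool.false_xor]
    · rw [Function.update_of_ne hk, Function.update_of_ne hk]
  have hiff : ∀ x : (ι → Bool) × (κ → Bool),
      (q = (x.1, Function.update x.2 j (xor (x.1 i) (x.2 j)))) ↔
        (x = (q.1, Function.update q.2 j (xor (q.1 i) (q.2 j)))) := by
    intro x
    constructor
    · intro h
      rw [h]
      exact (hff x).symm
    · intro h
      rw [h]
      exact (hff q).symm
  unfold Matrix.mulVec dotProduct CNOT2
  simp only [Matrix.of_apply]
  rw [Subsingleton.elim (fun (a b : κ) => Classical.propDecidable (a = b))
    (inferInstance : DecidableEq κ)]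
  simp_rw [hiff]
  simp [ite_mul]

/-- parity accumulator for a list of CNOT pairs -/
def totB (l : List (ι × κ)) (x : ι → Bool) (j : κ) : Bool :=
  l.foldr (fun p acc => xor (if p.2 = j then x p.1 else false) acc) false

lemma prod_CNOT2_mulVec (l : List (ι × κ)) (u : ((ι → Bool) × (κ → Bool)) → ℂ) :
    ((l.map fun p => CNOT2 p.1 p.2).prod).mulVec u
      = fun q => u (q.1, fun k => xor (totB l q.1 k) (q.2 k)) := by
  induction l with
  | nil =>
    funext q
    simp only [List.map_nil, List.prod_nil, Matrix.one_mulVec, totB, List.foldr_nil,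
      Bool.false_xor]
  | cons h t ih =>
    funext q
    rw [List.map_cons, List.prod_cons, ← Matrix.mulVec_mulVec, CNOT2_mulVec, ih]
    simp only
    congr 1
    refine Prod.ext rfl ?_
    funext k
    simp only [totB, List.foldr_cons]
    have hxor : ∀ a b c : Bool, xor c (xor a b) = xor (xor a c) b := by decide
    by_cases hk : k = h.2
    · subst hk
      rw [Function.update_self, if_pos rfl]
      exact hxor _ _ _
    · rw [Function.update_of_ne hk, if_neg fun h' => hk h'.symm, Bool.false_xor]

lemma totB_eq_countP (l : List (ι × κ)) (x : ι → Bool) (j : κ) :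
    totB l x j = ((l.countP fun p => decide (p.2 = j) && x p.1) % 2 == 1) := by
  induction l with
  | nil => rfl
  | cons h t ih =>
    have hparity : ∀ n : ℕ, (((n + 1) % 2 == 1) : Bool) = !(n % 2 == 1) := by
      intro n
      rcases Nat.mod_two_eq_zero_or_one n with hn | hn <;> simp [Nat.add_mod, hn]
    simp only [totB, List.foldr_cons] at ih ⊢
    rw [List.countP_cons, ih]
    by_cases hc : (decide (h.2 = j) && x h.1) = true
    · have h1 : (if h.2 = j then x h.1 else false) = true := by
        simp at hc
        simp [hc]
      rw [hc, if_pos rfl, h1, hparity]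
      cases ((t.countP fun p => decide (p.2 = j) && x p.1) % 2 == 1) <;> rfl
    · have h1 : (if h.2 = j then x h.1 else false) = false := by
        by_cases hj : h.2 = j <;> simp [hj] at hc ⊢ <;> simp [hc]
      rw [h1]
      simp [hc]

lemma totB_val (A : Finset ι) (B : Finset κ) (l : List (ι × κ)) (hl : l.Nodup)
    (hmem : ∀ p : ι × κ, p ∈ l ↔ p.1 ∈ A ∧ p.2 ∈ B) (x : ι → Bool) (j : κ) :
    totB l x j = (decide (j ∈ B) && ((A.filter fun i => x i = true).card % 2 == 1)) := by
  rw [totB_eq_countP]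
  have hBcard : (B.filter fun k => k = j).card = if j ∈ B then 1 else 0 := by
    by_cases hj : j ∈ B
    · rw [if_pos hj]
      have : (B.filter fun k => k = j) = {j} := by
        ext k
        simp only [Finset.mem_filter, Finset.mem_singleton]
        constructor
        · exact fun hh => hh.2
        · rintro rfl
          exact ⟨hj, rfl⟩
      rw [this, Finset.card_singleton]
    · rw [if_neg hj]
      have : (B.filter fun k => k = j) = ∅ := by
        ext k
        simp only [Finset.mem_filter, Finset.notMem_empty, iff_false, not_and]
        rintro hk rfl
        exact hj hk
      rw [this, Finset.card_empty]
  have hcount : (l.countP fun p => decide (p.2 = j) && x p.1)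
      = (A.filter fun i => x i = true).card * (if j ∈ B then 1 else 0) := by
    rw [List.countP_eq_length_filter, ← List.toFinset_card_of_nodup (hl.filter _)]
    have hset : (l.filter fun p => decide (p.2 = j) && x p.1).toFinset
        = (A.filter fun i => x i = true) ×ˢ (B.filter fun k => k = j) := by
      ext p
      rw [List.mem_toFinset, List.mem_filter]
      simp only [Finset.mem_product, Finset.mem_filter, Bool.and_eq_true, decide_eq_true_eq,
        hmem]
      tauto
    rw [hset, Finset.card_product, hBcard]
  rw [hcount]
  by_cases hj : j ∈ B <;> simp [hj]

end auxlem

/-- the round-robin product of `|A|·|B|` physical CNOT gates maps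
`V₂ ⊗ V₃` onto itself and implements the logical CNOT with the first code as
control and the second as target. -/
theorem stmt7 (n₂ n₃ : ℕ) (A : Finset (Fin n₂)) (B : Finset (Fin n₃))
    (v : Bool → ((Fin n₂ → Bool) → ℂ)) (w : Bool → ((Fin n₃ → Bool) → ℂ))
    (hvn : ∀ a, qInner (v a) (v a) = 1) (hvo : qInner (v false) (v true) = 0)
    (hwn : ∀ b, qInner (w b) (w b) = 1) (hwo : qInner (w false) (w true) = 0)
    (hZ : ∀ a, (ZA A).mulVec (v a) = (if a then (-1 : ℂ) else 1) • v a)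
    (hX : ∀ b, (XB B).mulVec (w b) = w (!b))
    (l : List (Fin n₂ × Fin n₃)) (hl : l.Nodup) (hlAB : l.toFinset = A ×ˢ B) :
    (∀ a b : Bool,
      ((l.map fun p => CNOT2 p.1 p.2).prod).mulVec (tens2 (v a) (w b))
        = tens2 (v a) (w (xor a b))) ∧
    Submodule.map ((l.map fun p => CNOT2 p.1 p.2).prod).mulVecLin
        (Submodule.span ℂ {u | ∃ a b : Bool, u = tens2 (v a) (w b)})
      = Submodule.span ℂ {u | ∃ a b : Bool, u = tens2 (v a) (w b)} := by
  have hsupp : ∀ (a : Bool) (x : Fin n₂ → Bool), v a x ≠ 0 →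
      (((A.filter fun i => x i = true).card % 2 == 1) = a) := by
    intro a x hx
    exact support_parity A a (v a) (hZ a) x hx
  have key : ∀ a b : Bool,
      ((l.map fun p => CNOT2 p.1 p.2).prod).mulVec (tens2 (v a) (w b))
        = tens2 (v a) (w (xor a b)) := by
    intro a b
    rw [prod_CNOT2_mulVec]
    funext q
    obtain ⟨x, y⟩ := q
    show tens2 (v a) (w b) (x, fun k => xor (totB l x k) (y k)) = v a x * w (xor a b) y
    unfold tens2
    simp only
    by_cases hx : v a x = 0
    · rw [hx, zero_mul, zero_mul]
    · have hpar := hsupp a x hx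
      have hmem : ∀ p : Fin n₂ × Fin n₃, p ∈ l ↔ p.1 ∈ A ∧ p.2 ∈ B := by
        intro p
        rw [← List.mem_toFinset, hlAB, Finset.mem_product]
      have htv : ∀ k, totB l x k = (decide (k ∈ B) && a) := by
        intro k
        rw [totB_val A B l hl hmem, hpar]
      cases a
      · have hy : (fun k => xor (totB l x k) (y k)) = y := by
          funext k
          simp [htv]
        rw [hy]
        simp
      · have hy : (fun k => xor (totB l x k) (y k))
            = (fun k => xor (decide (k ∈ B)) (y k)) := by
          funext k
          simp [htv]
        rw [hy]
        have hw := congrFun (hX b) y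
        rw [XB_mulVec'] at hw
        rw [hw]
        simp
  refine ⟨key, ?_⟩
  rw [Submodule.map_span]
  congr 1
  ext u
  simp only [Set.mem_image, Set.mem_setOf_eq]
  constructor
  · rintro ⟨u', ⟨a, b, rfl⟩, rfl⟩
    exact ⟨a, xor a b, by rw [Matrix.mulVecLin_apply, key]⟩
  · rintro ⟨a, b, rfl⟩
    refine ⟨tens2 (v a) (w (xor a b)), ⟨a, xor a b, rfl⟩, ?_⟩
    rw [Matrix.mulVecLin_apply, key]
    cases a <;> cases b <;> rfl

end
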